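/- For any graph G and any edge e of G, the game domination number satisfies |γ_g(G) − γ_g(G−e)| ≤ 2. -/
import Mathlib


open Classical

noncomputable section

namespace DomGame

variable {V : Type*} [Fintype V]

/-- Closed neighborhood of `v` as a `Finset`. -/
noncomputable def N (G : SimpleGraph V) (v : V) : Finset V :=
  Finset.univ.filter (fun u => G.Adj v u ∨ u = v)

/-- Legal moves given the set `S` of already dominated vertices. -/
noncomputable def moves (G : SimpleGraph V) (S : Finset V) : Finset V :=
  Finset.univ.filter (fun v => ¬ N G v ⊆ S)

lemma card_lt {G : SimpleGraph V} {S : Finset V} (v : V) (hv : v ∈ moves G S) :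
    (Finset.univ \ (S ∪ N G v)).card < (Finset.univ \ S).card := by
  simp only [moves, Finset.mem_filter] at hv
  obtain ⟨u, hu, hus⟩ := Finset.not_subset.mp hv.2
  apply Finset.card_lt_card
  refine ⟨Finset.sdiff_subset_sdiff (le_refl _) Finset.subset_union_left, ?_⟩
  intro hsub
  have := hsub (Finset.mem_sdiff.mpr ⟨Finset.mem_univ u, hus⟩)
  rw [Finset.mem_sdiff, Finset.mem_union] at this
  exact this.2 (Or.inr hu)

mutual
/-- Number of moves with optimal play when it is Dominator's turn and
`S` is the set of already dominated vertices. -/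
noncomputable def gameD (G : SimpleGraph V) (S : Finset V) : ℕ :=
  if h : (moves G S).Nonempty then
    1 + (moves G S).attach.inf' (by simpa using h)
      (fun v => gameS G (S ∪ N G v.1))
  else 0
termination_by (Finset.univ \ S).card
decreasing_by exact card_lt v.1 v.2

/-- Number of moves with optimal play when it is Staller's turn. -/
noncomputable def gameS (G : SimpleGraph V) (S : Finset V) : ℕ :=
  if h : (moves G S).Nonempty then
    1 + (moves G S).attach.sup' (by simpa using h)
      (fun v => gameD G (S ∪ N G v.1))
  else 0
termination_by (Finset.univ \ S).card
decreasing_by exact card_lt v.1 v.2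
end

/-- The (Dominator-start) game domination number. -/
noncomputable def gammaG (G : SimpleGraph V) : ℕ := gameD G ∅

/-- The Staller-start game domination number. -/
noncomputable def gammaG' (G : SimpleGraph V) : ℕ := gameS G ∅

end DomGame

section Aux

namespace DomGame

open Finset

variable {V : Type*} [Fintype V]

lemma self_mem_N (G : SimpleGraph V) (v : V) : v ∈ N G v := by
  simp [N]

lemma mem_moves {G : SimpleGraph V} {S : Finset V} {v : V} :
    v ∈ moves G S ↔ ¬ N G v ⊆ S := by simp [moves]

lemma moves_nonempty {G : SimpleGraph V} {S : Finset V} (h : S ≠ Finset.univ) :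
    (moves G S).Nonempty := by
  obtain ⟨u, hu⟩ : ∃ u, u ∉ S := by
    by_contra hc; push_neg at hc; exact h (Finset.eq_univ_iff_forall.mpr hc)
  exact ⟨u, mem_moves.mpr (fun hs => hu (hs (self_mem_N G u)))⟩

lemma ne_univ_of_moves {G : SimpleGraph V} {S : Finset V} (h : (moves G S).Nonempty) :
    S ≠ Finset.univ := by
  rintro rfl
  obtain ⟨v, hv⟩ := h
  exact mem_moves.mp hv (Finset.subset_univ _)

lemma inf'_attach' {α : Type*} (s : Finset α) (h : s.Nonempty) (f : α → ℕ) :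
    s.attach.inf' (by simpa using h) (fun v => f v.1) = s.inf' h f := by
  apply le_antisymm
  · obtain ⟨i, hi, heq⟩ := Finset.exists_mem_eq_inf' h f
    rw [heq]
    exact Finset.inf'_le (fun v : {x // x ∈ s} => f v.1) (Finset.mem_attach _ ⟨i, hi⟩)
  · refine Finset.le_inf' _ _ (fun v hv => ?_)
    exact Finset.inf'_le f v.2

lemma sup'_attach' {α : Type*} (s : Finset α) (h : s.Nonempty) (f : α → ℕ) :
    s.attach.sup' (by simpa using h) (fun v => f v.1) = s.sup' h f := by
  apply le_antisymm
  · refine Finset.sup'_le _ _ (fun v hv => ?_)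
    exact Finset.le_sup' f v.2
  · obtain ⟨i, hi, heq⟩ := Finset.exists_mem_eq_sup' h f
    rw [heq]
    exact Finset.le_sup' (fun v : {x // x ∈ s} => f v.1) (Finset.mem_attach _ ⟨i, hi⟩)

lemma gameD_of_empty {G : SimpleGraph V} {S : Finset V} (h : ¬ (moves G S).Nonempty) :
    gameD G S = 0 := by rw [gameD, dif_neg h]

lemma gameS_of_empty {G : SimpleGraph V} {S : Finset V} (h : ¬ (moves G S).Nonempty) :
    gameS G S = 0 := by rw [gameS, dif_neg h]

lemma gameD_le {G : SimpleGraph V} {S : Finset V} {w : V} (hw : w ∈ moves G S) :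
    gameD G S ≤ 1 + gameS G (S ∪ N G w) := by
  have h : (moves G S).Nonempty := ⟨w, hw⟩
  rw [gameD, dif_pos h]
  exact Nat.add_le_add_left (Finset.inf'_le (fun v : {x // x ∈ moves G S} => gameS G (S ∪ N G v.1)) (Finset.mem_attach _ ⟨w, hw⟩)) 1

lemma gameS_ge {G : SimpleGraph V} {S : Finset V} {w : V} (hw : w ∈ moves G S) :
    1 + gameD G (S ∪ N G w) ≤ gameS G S := by
  have h : (moves G S).Nonempty := ⟨w, hw⟩
  rw [gameS, dif_pos h]
  exact Nat.add_le_add_left (Finset.le_sup' (fun v : {x // x ∈ moves G S} => gameD G (S ∪ N G v.1)) (Finset.mem_attach _ ⟨w, hw⟩)) 1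

lemma gameD_eq {G : SimpleGraph V} {S : Finset V} (h : (moves G S).Nonempty) :
    ∃ v ∈ moves G S, gameD G S = 1 + gameS G (S ∪ N G v) := by
  rw [gameD, dif_pos h, inf'_attach' _ h (fun u => gameS G (S ∪ N G u))]
  obtain ⟨i, hi, heq⟩ := Finset.exists_mem_eq_inf' h (fun v => gameS G (S ∪ N G v))
  exact ⟨i, hi, by rw [heq]⟩

lemma gameS_eq {G : SimpleGraph V} {S : Finset V} (h : (moves G S).Nonempty) :
    ∃ v ∈ moves G S, gameS G S = 1 + gameD G (S ∪ N G v) := by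
  rw [gameS, dif_pos h, sup'_attach' _ h (fun u => gameD G (S ∪ N G u))]
  obtain ⟨i, hi, heq⟩ := Finset.exists_mem_eq_sup' h (fun v => gameD G (S ∪ N G v))
  exact ⟨i, hi, by rw [heq]⟩

/-- Trivial bound: the game lasts at most the number of undominated vertices. -/
lemma game_le_card (G : SimpleGraph V) :
    ∀ n (S : Finset V), (Finset.univ \ S).card ≤ n →
      gameD G S ≤ (Finset.univ \ S).card ∧ gameS G S ≤ (Finset.univ \ S).card := by
  intro n
  induction n with
  | zero =>
    intro S hS
    by_cases h : (moves G S).Nonempty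
    · obtain ⟨v, hv⟩ := h
      have := card_lt v hv
      omega
    · rw [gameD_of_empty h, gameS_of_empty h]; omega
  | succ n ih =>
    intro S hS
    by_cases h : (moves G S).Nonempty
    · constructor
      · obtain ⟨v, hv, heq⟩ := gameD_eq h
        have hlt := card_lt v hv
        have := (ih (S ∪ N G v) (by omega)).2
        omega
      · obtain ⟨v, hv, heq⟩ := gameS_eq h
        have hlt := card_lt v hv
        have := (ih (S ∪ N G v) (by omega)).1
        omega
    · rw [gameD_of_empty h, gameS_of_empty h]; omega

/-- Continuation principle: more dominated vertices can only shorten the game. -/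
lemma continuation (H : SimpleGraph V) :
    ∀ n (S T : Finset V), T ⊆ S →
      (Finset.univ \ S).card + (Finset.univ \ T).card ≤ n →
      gameD H S ≤ gameD H T ∧ gameS H S ≤ gameS H T := by
  intro n
  induction n with
  | zero =>
    intro S T hTS hn
    by_cases h : (moves H S).Nonempty
    · obtain ⟨v, hv⟩ := h
      have := card_lt v hv
      omega
    · rw [gameD_of_empty h, gameS_of_empty h]; omega
  | succ n ih =>
    intro S T hTS hn
    by_cases hS : (moves H S).Nonempty
    · have hT : (moves H T).Nonempty := by
        apply moves_nonempty
        intro hTu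
        exact ne_univ_of_moves hS (Finset.univ_subset_iff.mp (hTu ▸ hTS))
      constructor
      · obtain ⟨v, hv, heq⟩ := gameD_eq hT
        have hltT := card_lt v hv
        by_cases hvS : N H v ⊆ S
        · obtain ⟨w, hw⟩ := hS
          have h1 := gameD_le hw
          have hltS := card_lt w hw
          have h2 : T ∪ N H v ⊆ S ∪ N H w :=
            Finset.union_subset (hTS.trans Finset.subset_union_left)
              (hvS.trans Finset.subset_union_left)
          have h3 := (ih (S ∪ N H w) (T ∪ N H v) h2 (by omega)).2
          omega
        · have hvm : v ∈ moves H S := mem_moves.mpr hvS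
          have h1 := gameD_le hvm
          have hltS := card_lt v hvm
          have h3 := (ih (S ∪ N H v) (T ∪ N H v) (Finset.union_subset_union hTS le_rfl)
            (by omega)).2
          omega
      · obtain ⟨v, hv, heq⟩ := gameS_eq hS
        have hvT : v ∈ moves H T := mem_moves.mpr (fun hs => mem_moves.mp hv (hs.trans hTS))
        have h1 := gameS_ge hvT
        have hltS := card_lt v hv
        have hltT := card_lt v hvT
        have h3 := (ih (S ∪ N H v) (T ∪ N H v) (Finset.union_subset_union hTS le_rfl)
          (by omega)).1
        omega
    · rw [gameD_of_empty hS, gameS_of_empty hS]; omega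

lemma gameD_mono (H : SimpleGraph V) {S T : Finset V} (hTS : T ⊆ S) :
    gameD H S ≤ gameD H T :=
  (continuation H _ S T hTS le_rfl).1

lemma gameS_mono (H : SimpleGraph V) {S T : Finset V} (hTS : T ⊆ S) :
    gameS H S ≤ gameS H T :=
  (continuation H _ S T hTS le_rfl).2

lemma gameD_le_gameS (H : SimpleGraph V) (S : Finset V) : gameD H S ≤ gameS H S + 1 := by
  by_cases h : (moves H S).Nonempty
  · obtain ⟨w, hw⟩ := h
    have h1 := gameD_le hw
    have h2 := gameS_mono H (Finset.subset_union_left (s₁ := S) (s₂ := N H w))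
    omega
  · rw [gameD_of_empty h]; omega

end DomGame

end Aux

section Aux2

namespace DomGame

open Finset

variable {V : Type*} [Fintype V]

variable {G G' : SimpleGraph V} {a b : V}

/-- If both special vertices are already dominated, the two games coincide. -/
lemma game_eq_of_pair
    (hsub : ∀ v, N G' v ⊆ N G v)
    (hdiff : ∀ v u, u ∈ N G v → u ∉ N G' v → u = a ∨ u = b) :
    ∀ n (S : Finset V), (Finset.univ \ S).card ≤ n → a ∈ S → b ∈ S →
      gameD G S = gameD G' S ∧ gameS G S = gameS G' S := by
  have hiff : ∀ (S : Finset V), a ∈ S → b ∈ S → ∀ v, (N G v ⊆ S ↔ N G' v ⊆ S) := by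
    intro S ha hb v
    constructor
    · exact fun h => (hsub v).trans h
    · intro h u hu
      by_cases h2 : u ∈ N G' v
      · exact h h2
      · rcases hdiff v u hu h2 with rfl | rfl <;> assumption
  have hmoves : ∀ (S : Finset V), a ∈ S → b ∈ S → moves G S = moves G' S := by
    intro S ha hb
    ext v
    simp only [moves, Finset.mem_filter, Finset.mem_univ, true_and]
    rw [hiff S ha hb v]
  have hunion : ∀ (S : Finset V), a ∈ S → b ∈ S → ∀ v, S ∪ N G v = S ∪ N G' v := by
    intro S ha hb v
    apply Finset.Subset.antisymm
    · refine Finset.union_subset Finset.subset_union_left (fun u hu => ?_)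
      by_cases h2 : u ∈ N G' v
      · exact Finset.mem_union_right _ h2
      · rcases hdiff v u hu h2 with rfl | rfl <;> exact Finset.mem_union_left _ (by assumption)
    · exact Finset.union_subset Finset.subset_union_left
        ((hsub v).trans Finset.subset_union_right)
  intro n
  induction n with
  | zero =>
    intro S hS ha hb
    by_cases h : (moves G S).Nonempty
    · obtain ⟨v, hv⟩ := h
      have := card_lt v hv
      omega
    · have h' : ¬ (moves G' S).Nonempty := by rw [← hmoves S ha hb]; exact h
      rw [gameD_of_empty h, gameD_of_empty h', gameS_of_empty h, gameS_of_empty h']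
      exact ⟨rfl, rfl⟩
  | succ n ih =>
    intro S hS ha hb
    by_cases h : (moves G S).Nonempty
    · have h' : (moves G' S).Nonempty := by rw [← hmoves S ha hb]; exact h
      have key : ∀ v ∈ moves G S,
          gameS G (S ∪ N G v) = gameS G' (S ∪ N G' v) ∧
          gameD G (S ∪ N G v) = gameD G' (S ∪ N G' v) := by
        intro v hv
        have hv' : v ∈ moves G' S := by rw [← hmoves S ha hb]; exact hv
        have hlt := card_lt (G := G') (S := S) v hv'
        have hu := hunion S ha hb v
        rw [hu]
        have := ih (S ∪ N G' v) (by omega) (Finset.mem_union_left _ ha)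
          (Finset.mem_union_left _ hb)
        exact ⟨this.2, this.1⟩
      constructor
      · rw [gameD, dif_pos h, inf'_attach' _ h (fun u => gameS G (S ∪ N G u)),
          gameD, dif_pos h', inf'_attach' _ h' (fun u => gameS G' (S ∪ N G' u))]
        congr 1
        exact Finset.inf'_congr h (hmoves S ha hb) (fun v hv => (key v hv).1)
      · rw [gameS, dif_pos h, sup'_attach' _ h (fun u => gameD G (S ∪ N G u)),
          gameS, dif_pos h', sup'_attach' _ h' (fun u => gameD G' (S ∪ N G' u))]
        congr 1
        exact Finset.sup'_congr h (hmoves S ha hb) (fun v hv => (key v hv).2)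
    · have h' : ¬ (moves G' S).Nonempty := by rw [← hmoves S ha hb]; exact h
      rw [gameD_of_empty h, gameD_of_empty h', gameS_of_empty h, gameS_of_empty h']
      exact ⟨rfl, rfl⟩

end DomGame

end Aux2

section Aux3

namespace DomGame

open Finset

variable {V : Type*} [Fintype V]

variable {G G' : SimpleGraph V} {a b : V}

lemma pair_card_le {R : Finset V}
    (h : ∀ u ∈ (Finset.univ : Finset V), u ∉ R → u = a ∨ u = b) :
    (Finset.univ \ R).card ≤ 2 := by
  have hsub : Finset.univ \ R ⊆ {a, b} := by
    intro u hu
    rw [Finset.mem_sdiff] at hu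
    rcases h u hu.1 hu.2 with rfl | rfl <;> simp
  calc (Finset.univ \ R).card ≤ ({a, b} : Finset V).card := Finset.card_le_card hsub
    _ ≤ 2 := (Finset.card_insert_le _ _).trans (by simp)

/-- Direction A: the game on `G'` (real) is at most two longer than the game on `G`
(imagined), given that the real dominated set `R` is contained in the imagined one `I`
with difference inside `{a, b}`. -/
lemma dirA (hsub : ∀ v, N G' v ⊆ N G v)
    (hdiff : ∀ v u, u ∈ N G v → u ∉ N G' v → u = a ∨ u = b) :
    ∀ n (R I : Finset V), R ⊆ I → (∀ u ∈ I, u ∉ R → u = a ∨ u = b) →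
      (Finset.univ \ I).card ≤ n →
      gameD G' R ≤ gameD G I + 2 ∧ gameS G' R ≤ gameS G I + 2 := by
  intro n
  induction n with
  | zero =>
    intro R I hRI hD hn
    by_cases hI : (moves G I).Nonempty
    · obtain ⟨v, hv⟩ := hI; have := card_lt v hv; omega
    · have hIu : I = Finset.univ := by
        by_contra hc; exact hI (moves_nonempty hc)
      have h2 := pair_card_le (a := a) (b := b) (R := R)
        (fun u hu hur => hD u (hIu ▸ hu) hur)
      have h3 := game_le_card G' _ R le_rfl
      exact ⟨by omega, by omega⟩
  | succ n ih =>
    intro R I hRI hD hn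
    by_cases hR : (moves G' R).Nonempty
    swap
    · rw [gameD_of_empty hR, gameS_of_empty hR]; exact ⟨by omega, by omega⟩
    by_cases hI : (moves G I).Nonempty
    swap
    · have hIu : I = Finset.univ := by
        by_contra hc; exact hI (moves_nonempty hc)
      have h2 := pair_card_le (a := a) (b := b) (R := R)
        (fun u hu hur => hD u (hIu ▸ hu) hur)
      have h3 := game_le_card G' _ R le_rfl
      exact ⟨by omega, by omega⟩
    constructor
    · -- Dominator's turn in both games
      obtain ⟨v, hv, heq⟩ := gameD_eq hI
      by_cases hvR : N G' v ⊆ R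
      · -- the imagined optimal move is illegal in the real game
        obtain ⟨u, huNv, huI⟩ := Finset.not_subset.mp (mem_moves.mp hv)
        have huR : u ∉ R := fun h => huI (hRI h)
        have hu_move : u ∈ moves G' R := mem_moves.mpr
          (fun hs => huR (hs (self_mem_N G' u)))
        have h1 := gameD_le hu_move
        have hsub2 : R ∪ N G' u ⊆ (I ∪ N G v) ∪ N G' u :=
          Finset.union_subset
            (hRI.trans (Finset.subset_union_left.trans Finset.subset_union_left))
            Finset.subset_union_right
        have hdiff2 : ∀ x ∈ (I ∪ N G v) ∪ N G' u, x ∉ R ∪ N G' u → x = a ∨ x = b := by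
          intro x hx hxn
          have hxR : x ∉ R := fun h => hxn (Finset.mem_union_left _ h)
          have hxu : x ∉ N G' u := fun h => hxn (Finset.mem_union_right _ h)
          rcases Finset.mem_union.mp hx with hx | hx
          · rcases Finset.mem_union.mp hx with hx | hx
            · exact hD x hx hxR
            · exact hdiff v x hx (fun h => hxR (hvR h))
          · exact absurd hx hxu
        have hmeas : (Finset.univ \ ((I ∪ N G v) ∪ N G' u)).card ≤ n := by
          have l1 := card_lt v hv
          have l2 : (Finset.univ \ ((I ∪ N G v) ∪ N G' u)).card ≤
              (Finset.univ \ (I ∪ N G v)).card :=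
            Finset.card_le_card (Finset.sdiff_subset_sdiff le_rfl Finset.subset_union_left)
          omega
        have h2 := (ih (R ∪ N G' u) ((I ∪ N G v) ∪ N G' u) hsub2 hdiff2 hmeas).2
        have h3 : gameS G ((I ∪ N G v) ∪ N G' u) ≤ gameS G (I ∪ N G v) :=
          gameS_mono G Finset.subset_union_left
        omega
      · -- the imagined optimal move is legal in the real game
        have hvm : v ∈ moves G' R := mem_moves.mpr hvR
        have h1 := gameD_le hvm
        have hsub2 : R ∪ N G' v ⊆ I ∪ N G v := Finset.union_subset_union hRI (hsub v)
        have hdiff2 : ∀ x ∈ I ∪ N G v, x ∉ R ∪ N G' v → x = a ∨ x = b := by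
          intro x hx hxn
          have hxR : x ∉ R := fun h => hxn (Finset.mem_union_left _ h)
          have hxv : x ∉ N G' v := fun h => hxn (Finset.mem_union_right _ h)
          rcases Finset.mem_union.mp hx with hx | hx
          · exact hD x hx hxR
          · exact hdiff v x hx hxv
        have hmeas : (Finset.univ \ (I ∪ N G v)).card ≤ n := by
          have := card_lt v hv; omega
        have h2 := (ih (R ∪ N G' v) (I ∪ N G v) hsub2 hdiff2 hmeas).2
        omega
    · -- Staller's turn in both games
      obtain ⟨w, hw, heq⟩ := gameS_eq hR
      by_cases hwI : N G w ⊆ I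
      · -- the real move is illegal in the imagined game (skip)
        have hR1I : R ∪ N G' w ⊆ I := Finset.union_subset hRI ((hsub w).trans hwI)
        obtain ⟨x, hxN, hxR⟩ := Finset.not_subset.mp (mem_moves.mp hw)
        have hxI : x ∈ I := hwI (hsub w hxN)
        have hxab : x = a ∨ x = b := hD x hxI hxR
        have hxR1 : x ∈ R ∪ N G' w := Finset.mem_union_right _ hxN
        by_cases hab : a ∈ R ∪ N G' w ∧ b ∈ R ∪ N G' w
        · -- both specials dominated for real: the states agree
          have hIR1 : I = R ∪ N G' w := by
            apply Finset.Subset.antisymm _ hR1I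
            intro y hy
            by_cases hyR : y ∈ R
            · exact Finset.mem_union_left _ hyR
            · rcases hD y hy hyR with rfl | rfl
              · exact hab.1
              · exact hab.2
          have e1 : gameD G (R ∪ N G' w) = gameD G' (R ∪ N G' w) :=
            (game_eq_of_pair hsub hdiff _ (R ∪ N G' w) le_rfl hab.1 hab.2).1
          have e2 := gameD_le_gameS G I
          have e3 : gameD G I = gameD G (R ∪ N G' w) := by rw [hIR1]
          omega
        · -- one special still undominated: Dominator covers it and the states agree
          have hex : ∃ u, (u = a ∨ u = b) ∧ u ∉ R ∪ N G' w := by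
            by_cases ha : a ∈ R ∪ N G' w
            · exact ⟨b, Or.inr rfl, fun hb => hab ⟨ha, hb⟩⟩
            · exact ⟨a, Or.inl rfl, ha⟩
          obtain ⟨u, huab, huR1⟩ := hex
          have hxu : x ≠ u := fun h => huR1 (h ▸ hxR1)
          have habR2 : a ∈ (R ∪ N G' w) ∪ N G' u ∧ b ∈ (R ∪ N G' w) ∪ N G' u := by
            have huN : u ∈ (R ∪ N G' w) ∪ N G' u :=
              Finset.mem_union_right _ (self_mem_N G' u)
            have hxM : x ∈ (R ∪ N G' w) ∪ N G' u := Finset.mem_union_left _ hxR1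
            rcases hxab with rfl | rfl <;> rcases huab with rfl | rfl
            · exact absurd rfl hxu
            · exact ⟨hxM, huN⟩
            · exact ⟨huN, hxM⟩
            · exact absurd rfl hxu
          have hu_move : u ∈ moves G' (R ∪ N G' w) := mem_moves.mpr
            (fun hs => huR1 (hs (self_mem_N G' u)))
          have h1 := gameD_le hu_move
          have e1 : gameS G ((R ∪ N G' w) ∪ N G' u) = gameS G' ((R ∪ N G' w) ∪ N G' u) :=
            (game_eq_of_pair hsub hdiff _ _ le_rfl habR2.1 habR2.2).2
          have e2 : gameS G ((R ∪ N G' w) ∪ N G' u) ≤ gameS G I := by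
            apply gameS_mono G
            intro y hy
            by_cases hyR : y ∈ R
            · exact Finset.mem_union_left _ (Finset.mem_union_left _ hyR)
            · rcases hD y hy hyR with rfl | rfl
              · exact habR2.1
              · exact habR2.2
          omega
      · -- the real move is legal in the imagined game
        have hwI' : w ∈ moves G I := mem_moves.mpr hwI
        have h1 := gameS_ge hwI'
        have hsub2 : R ∪ N G' w ⊆ I ∪ N G w := Finset.union_subset_union hRI (hsub w)
        have hdiff2 : ∀ x ∈ I ∪ N G w, x ∉ R ∪ N G' w → x = a ∨ x = b := by
          intro x hx hxn
          have hxR : x ∉ R := fun h => hxn (Finset.mem_union_left _ h)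
          have hxw : x ∉ N G' w := fun h => hxn (Finset.mem_union_right _ h)
          rcases Finset.mem_union.mp hx with hx | hx
          · exact hD x hx hxR
          · exact hdiff w x hx hxw
        have hmeas : (Finset.univ \ (I ∪ N G w)).card ≤ n := by
          have := card_lt w hwI'; omega
        have h2 := (ih (R ∪ N G' w) (I ∪ N G w) hsub2 hdiff2 hmeas).1
        omega

/-- Direction B: the game on `G` (real) is at most two longer than the game on `G'`
(imagined), given that the imagined dominated set `I` is contained in the real one `R`
with difference inside `{a, b}`. -/
lemma dirB (hsub : ∀ v, N G' v ⊆ N G v)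
    (hdiff : ∀ v u, u ∈ N G v → u ∉ N G' v → u = a ∨ u = b) :
    ∀ n (R I : Finset V), I ⊆ R → (∀ u ∈ R, u ∉ I → u = a ∨ u = b) →
      (Finset.univ \ I).card ≤ n →
      gameD G R ≤ gameD G' I + 2 ∧ gameS G R ≤ gameS G' I + 2 := by
  intro n
  induction n with
  | zero =>
    intro R I hIR hD hn
    by_cases hI : (moves G' I).Nonempty
    · obtain ⟨v, hv⟩ := hI; have := card_lt v hv; omega
    · have hIu : I = Finset.univ := by
        by_contra hc; exact hI (moves_nonempty hc)
      have hRu : R = Finset.univ := Finset.univ_subset_iff.mp (hIu ▸ hIR)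
      have hRm : ¬ (moves G R).Nonempty := fun h => ne_univ_of_moves h hRu
      rw [gameD_of_empty hRm, gameS_of_empty hRm]
      exact ⟨by omega, by omega⟩
  | succ n ih =>
    intro R I hIR hD hn
    by_cases hR : (moves G R).Nonempty
    swap
    · rw [gameD_of_empty hR, gameS_of_empty hR]; exact ⟨by omega, by omega⟩
    have hI : (moves G' I).Nonempty := by
      apply moves_nonempty
      intro hIu
      exact ne_univ_of_moves hR (Finset.univ_subset_iff.mp (hIu ▸ hIR))
    constructor
    · -- Dominator's turn in both games
      obtain ⟨v, hv, heq⟩ := gameD_eq hI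
      by_cases hvR : N G v ⊆ R
      · -- the imagined optimal move is illegal in the real game
        obtain ⟨w, hw⟩ := hR
        have h1 := gameD_le hw
        have h2 : gameS G (R ∪ N G w) ≤ gameS G (I ∪ N G' v) := by
          apply gameS_mono G
          exact Finset.union_subset (hIR.trans Finset.subset_union_left)
            (((hsub v).trans hvR).trans Finset.subset_union_left)
        have hmeas : (Finset.univ \ (I ∪ N G' v)).card ≤ n := by
          have := card_lt v hv; omega
        have h3 := (ih (I ∪ N G' v) (I ∪ N G' v) le_rfl
          (fun u hu hnu => absurd hu hnu) hmeas).2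
        omega
      · -- the imagined optimal move is legal in the real game
        have hvm : v ∈ moves G R := mem_moves.mpr hvR
        have h1 := gameD_le hvm
        have hsub2 : I ∪ N G' v ⊆ R ∪ N G v := Finset.union_subset_union hIR (hsub v)
        have hdiff2 : ∀ x ∈ R ∪ N G v, x ∉ I ∪ N G' v → x = a ∨ x = b := by
          intro x hx hxn
          have hxI : x ∉ I := fun h => hxn (Finset.mem_union_left _ h)
          have hxv : x ∉ N G' v := fun h => hxn (Finset.mem_union_right _ h)
          rcases Finset.mem_union.mp hx with hx | hx
          · exact hD x hx hxI
          · exact hdiff v x hx hxv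
        have hmeas : (Finset.univ \ (I ∪ N G' v)).card ≤ n := by
          have := card_lt v hv; omega
        have h2 := (ih (R ∪ N G v) (I ∪ N G' v) hsub2 hdiff2 hmeas).2
        omega
    · -- Staller's turn in both games
      obtain ⟨w, hw, heq⟩ := gameS_eq hR
      by_cases hwI : N G' w ⊆ I
      · -- the real move is illegal in the imagined game (skip)
        have hIR1 : I ⊆ R ∪ N G w := hIR.trans Finset.subset_union_left
        have hdiffR1 : ∀ x ∈ R ∪ N G w, x ∉ I → x = a ∨ x = b := by
          intro x hx hxI
          rcases Finset.mem_union.mp hx with hx | hx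
          · exact hD x hx hxI
          · exact hdiff w x hx (fun h => hxI (hwI h))
        obtain ⟨x, hxN, hxR⟩ := Finset.not_subset.mp (mem_moves.mp hw)
        have hxI : x ∉ I := fun h => hxR (hIR h)
        have hxR1 : x ∈ R ∪ N G w := Finset.mem_union_right _ hxN
        have hxab : x = a ∨ x = b := hdiffR1 x hxR1 hxI
        by_cases hab : a ∈ R ∪ N G w ∧ b ∈ R ∪ N G w
        · have e1 : gameD G (R ∪ N G w) = gameD G' (R ∪ N G w) :=
            (game_eq_of_pair hsub hdiff _ (R ∪ N G w) le_rfl hab.1 hab.2).1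
          have e2 : gameD G' (R ∪ N G w) ≤ gameD G' I := gameD_mono G' hIR1
          have e3 := gameD_le_gameS G' I
          omega
        · have hex : ∃ u, (u = a ∨ u = b) ∧ u ∉ R ∪ N G w := by
            by_cases ha : a ∈ R ∪ N G w
            · exact ⟨b, Or.inr rfl, fun hb => hab ⟨ha, hb⟩⟩
            · exact ⟨a, Or.inl rfl, ha⟩
          obtain ⟨u, huab, huR1⟩ := hex
          have hxu : x ≠ u := fun h => huR1 (h ▸ hxR1)
          have habR2 : a ∈ (R ∪ N G w) ∪ N G u ∧ b ∈ (R ∪ N G w) ∪ N G u := by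
            have huN : u ∈ (R ∪ N G w) ∪ N G u :=
              Finset.mem_union_right _ (self_mem_N G u)
            have hxM : x ∈ (R ∪ N G w) ∪ N G u := Finset.mem_union_left _ hxR1
            rcases hxab with rfl | rfl <;> rcases huab with rfl | rfl
            · exact absurd rfl hxu
            · exact ⟨hxM, huN⟩
            · exact ⟨huN, hxM⟩
            · exact absurd rfl hxu
          have hu_move : u ∈ moves G (R ∪ N G w) := mem_moves.mpr
            (fun hs => huR1 (hs (self_mem_N G u)))
          have h1 := gameD_le hu_move
          have e1 : gameS G ((R ∪ N G w) ∪ N G u) = gameS G' ((R ∪ N G w) ∪ N G u) :=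
            (game_eq_of_pair hsub hdiff _ _ le_rfl habR2.1 habR2.2).2
          have e2 : gameS G' ((R ∪ N G w) ∪ N G u) ≤ gameS G' I :=
            gameS_mono G' (hIR1.trans Finset.subset_union_left)
          omega
      · -- the real move is legal in the imagined game
        have hwI' : w ∈ moves G' I := mem_moves.mpr hwI
        have h1 := gameS_ge hwI'
        have hsub2 : I ∪ N G' w ⊆ R ∪ N G w := Finset.union_subset_union hIR (hsub w)
        have hdiff2 : ∀ x ∈ R ∪ N G w, x ∉ I ∪ N G' w → x = a ∨ x = b := by
          intro x hx hxn
          have hxI : x ∉ I := fun h => hxn (Finset.mem_union_left _ h)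
          have hxw : x ∉ N G' w := fun h => hxn (Finset.mem_union_right _ h)
          rcases Finset.mem_union.mp hx with hx | hx
          · exact hD x hx hxI
          · exact hdiff w x hx hxw
        have hmeas : (Finset.univ \ (I ∪ N G' w)).card ≤ n := by
          have := card_lt w hwI'; omega
        have h2 := (ih (R ∪ N G w) (I ∪ N G' w) hsub2 hdiff2 hmeas).1
        omega

end DomGame

end Aux3


open DomGame in
/-- For any graph `G` and any edge `e` of `G`,
`|γ_g(G) − γ_g(G−e)| ≤ 2`. -/
theorem edge_removal_gameD {V : Type*} [Fintype V] (G : SimpleGraph V)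
    (e : Sym2 V) (he : e ∈ G.edgeSet) :
    |(gammaG G : ℤ) - gammaG (G.deleteEdges {e})| ≤ 2 := by
  clear he
  induction e using Sym2.ind with
  | _ a b =>
    set G' := G.deleteEdges {s(a, b)} with hG'
    have hsub : ∀ v, N G' v ⊆ N G v := by
      intro v u hu
      simp only [N, Finset.mem_filter, Finset.mem_univ, true_and, hG',
        SimpleGraph.deleteEdges_adj] at hu ⊢
      tauto
    have hdiff : ∀ v u, u ∈ N G v → u ∉ N G' v → u = a ∨ u = b := by
      intro v u hu hnu
      simp only [N, Finset.mem_filter, Finset.mem_univ, true_and, hG',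
        SimpleGraph.deleteEdges_adj, Set.mem_singleton_iff] at hu hnu
      push_neg at hnu
      rcases hu with hadj | rfl
      · have hsv : s(v, u) = s(a, b) := by tauto
        rw [Sym2.eq_iff] at hsv
        tauto
      · tauto
    have hemp : ∀ u ∈ (∅ : Finset V), u ∉ (∅ : Finset V) → u = a ∨ u = b :=
      fun u hu _ => absurd hu (Finset.notMem_empty u)
    have h1 := (dirA (G := G) (G' := G') (a := a) (b := b) hsub hdiff _ ∅ ∅ le_rfl hemp
      le_rfl).1
    have h2 := (dirB (G := G) (G' := G') (a := a) (b := b) hsub hdiff _ ∅ ∅ le_rfl hemp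
      le_rfl).1
    have hg1 : gammaG G = gameD G ∅ := rfl
    have hg2 : gammaG G' = gameD G' ∅ := rfl
    rw [abs_le]
    constructor
    · rw [hg1, hg2] at *
      push_cast
      omega
    · rw [hg1, hg2] at *
      push_cast
      omega
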